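/- Let G be a finite abelian group and H ≤ G a subgroup. Define the G×G complex matrix σ_H by (σ_H)_{g,g'} = 1/|G| if g − g' ∈ H and 0 otherwise. Then σ_H is a density matrix whose nonzero eigenvalues are all equal to |H|/|G|, occurring with multiplicity |G|/|H|; consequently its von Neumann entropy is S(σ_H) = log₂|G| − log₂|H|. -/

import Mathlib

open Finset Matrix
open scoped Classical ComplexOrder

/-- Shannon entropy (base 2) of a vector of reals, with the convention `0 · log₂ 0 = 0`. -/
noncomputable def shEntropy {α : Type*} [Fintype α] (q : α → ℝ) : ℝ :=
  -∑ a, q a * Real.logb 2 (q a)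

/-- Von Neumann entropy (base 2) of a Hermitian matrix, via its eigenvalues. -/
noncomputable def vnEntropy {α : Type*} [Fintype α] [DecidableEq α]
    (ρ : Matrix α α ℂ) : ℝ :=
  if h : ρ.IsHermitian then -∑ i, h.eigenvalues i * Real.logb 2 (h.eigenvalues i)
  else 0

/-- The post-query reduced state `σ_H` of the hidden subgroup problem, with entries
`(σ_H)_{g,g'} = 1/|G|` if `g − g' ∈ H` and `0` otherwise, is a density matrix whose
nonzero eigenvalues all equal `|H|/|G|` with multiplicity `|G|/|H|`; consequently its
von Neumann entropy is `log₂|G| − log₂|H|`. -/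
theorem hsp_post_query_state {G : Type*} [AddCommGroup G] [Fintype G] [DecidableEq G]
    (H : AddSubgroup G) :
    let σ : Matrix G G ℂ :=
      Matrix.of fun g g' => if g - g' ∈ H then ((Nat.card G : ℂ))⁻¹ else 0
    σ.PosSemidef ∧ σ.trace = 1 ∧
      ∀ hσ : σ.IsHermitian,
        (∀ i, hσ.eigenvalues i = (Nat.card H : ℝ) / (Nat.card G : ℝ) ∨
          hσ.eigenvalues i = 0) ∧
        (Finset.univ.filter fun i => hσ.eigenvalues i ≠ 0).card =
          Nat.card G / Nat.card H ∧
        vnEntropy σ = Real.logb 2 (Nat.card G) - Real.logb 2 (Nat.card H) := by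
  intro σ
  set n : ℕ := Nat.card G with hn
  set m : ℕ := Nat.card H with hm
  have hnpos : 0 < n := Nat.card_pos
  have hmpos : 0 < m := Nat.card_pos
  have hnR : (0:ℝ) < n := by exact_mod_cast hnpos
  have hmR : (0:ℝ) < m := by exact_mod_cast hmpos
  have hnC : (n:ℂ) ≠ 0 := by exact_mod_cast hnpos.ne'
  -- Hermitian
  have hherm : σ.IsHermitian := by
    ext g g'
    simp only [conjTranspose_apply, of_apply, σ]
    have : g' - g ∈ H ↔ g - g' ∈ H := by
      constructor <;> intro h <;> simpa using H.neg_mem h -- ok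
    rw [this]
    split <;> simp
  -- trace
  have hcardG : (Fintype.card G : ℂ) = (n : ℂ) := by rw [hn, Nat.card_eq_fintype_card]
  have htr : σ.trace = 1 := by
    calc σ.trace = ∑ g : G, σ g g := rfl
      _ = ∑ _g : G, ((n:ℂ))⁻¹ := by
          apply Finset.sum_congr rfl
          intro g _
          simp only [σ, of_apply, sub_self, if_pos H.zero_mem]
          rfl
      _ = 1 := by
          rw [Finset.sum_const, Finset.card_univ, nsmul_eq_mul, hcardG,
            mul_inv_cancel₀ hnC]
  -- counting lemma
  have hcount1 : ∀ g : G, (univ.filter fun g' => g - g' ∈ H).card = m := by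
    intro g
    rw [hm, ← Fintype.card_subtype, Nat.card_eq_fintype_card]
    exact Fintype.card_congr
      ⟨fun x => ⟨g - x.1, x.2⟩, fun h => ⟨g - h.1, by simpa using h.2⟩,
        fun x => by simp, fun h => by simp⟩
  have hcount : ∀ g g'' : G, ((univ.filter fun g' => g - g' ∈ H ∧ g' - g'' ∈ H).card : ℂ)
      = if g - g'' ∈ H then (m:ℂ) else 0 := by
    intro g g''
    split
    · rename_i hmem
      rw [show (univ.filter fun g' => g - g' ∈ H ∧ g' - g'' ∈ H)
          = (univ.filter fun g' => g - g' ∈ H) from ?_, hcount1]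
      apply Finset.filter_congr
      intro g' _
      constructor
      · exact fun h => h.1
      · intro h
        refine ⟨h, ?_⟩
        have : g' - g'' = (g - g'') - (g - g') := by abel
        rw [this]; exact H.sub_mem hmem h
    · rename_i hmem
      rw [Finset.filter_false_of_mem, Finset.card_empty, Nat.cast_zero]
      intro g' _ ⟨h1, h2⟩
      exact hmem (by simpa using H.add_mem h1 h2)
  -- σ * σ = (m/n) • σ
  have hsq : σ * σ = (((m:ℂ))/n) • σ := by
    ext g g''
    rw [mul_apply]
    have : ∀ g' : G, σ g g' * σ g' g''
        = if g - g' ∈ H ∧ g' - g'' ∈ H then ((n:ℂ))⁻¹ * ((n:ℂ))⁻¹ else 0 := by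
      intro g'
      simp only [σ, of_apply]
      split_ifs with h1 h2 h3 h4 <;> simp_all
    rw [Finset.sum_congr rfl fun g' _ => this g', ← Finset.sum_filter,
      Finset.sum_const, nsmul_eq_mul, hcount]
    simp only [Matrix.smul_apply, of_apply, σ, smul_eq_mul, ← hn]
    split_ifs
    · rw [div_eq_mul_inv]; ring
    · simp
  -- eigenvalue dichotomy
  have hdichot : ∀ hσ : σ.IsHermitian, ∀ i,
      hσ.eigenvalues i = (m:ℝ)/(n:ℝ) ∨ hσ.eigenvalues i = 0 := by
    intro hσ i
    set lam := hσ.eigenvalues i with hlam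
    have hv := hσ.mulVec_eigenvectorBasis i
    obtain ⟨j, hj⟩ : ∃ j, (hσ.eigenvectorBasis i) j ≠ 0 := by
      by_contra hc
      push_neg at hc
      exact hσ.eigenvectorBasis.orthonormal.ne_zero i (PiLp.ext hc)
    have e1 : (σ * σ) *ᵥ ⇑(hσ.eigenvectorBasis i)
        = lam • lam • ⇑(hσ.eigenvectorBasis i) := by
      rw [← mulVec_mulVec, hv, mulVec_smul, hv]
    have e2 : (σ * σ) *ᵥ ⇑(hσ.eigenvectorBasis i)
        = ((m:ℂ)/(n:ℂ)) • lam • ⇑(hσ.eigenvectorBasis i) := by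
      rw [hsq, smul_mulVec, hv]
    have e3 := congrFun (e1.symm.trans e2) j
    simp only [Pi.smul_apply, Complex.real_smul, smul_eq_mul] at e3
    have hfac : ((lam:ℂ) - (m:ℂ)/(n:ℂ)) * ((lam:ℂ) * (hσ.eigenvectorBasis i) j) = 0 := by
      rw [sub_mul, e3]; ring
    rcases mul_eq_zero.mp hfac with h | h
    · left
      have h2 : (lam:ℂ) = (((m:ℝ)/(n:ℝ) : ℝ) : ℂ) := by
        push_cast
        linear_combination h
      exact_mod_cast h2
    · rcases mul_eq_zero.mp h with h' | h'
      · right; exact_mod_cast h'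
      · exact absurd h' hj
  -- sum of eigenvalues is 1
  have hsum : ∀ hσ : σ.IsHermitian, ∑ i, hσ.eigenvalues i = 1 := by
    intro hσ
    have h2 : σ.trace = ∑ i, (hσ.eigenvalues i : ℂ) := by
      conv_lhs => rw [hσ.spectral_theorem]
      rw [Unitary.conjStarAlgAut_apply, Matrix.trace_mul_cycle, Unitary.coe_star_mul_self, one_mul, trace_diagonal]
      simp
    rw [htr] at h2
    exact_mod_cast h2.symm
  refine ⟨?_, htr, ?_⟩
  · refine hherm.posSemidef_iff_eigenvalues_nonneg.mpr (fun i => ?_ : ∀ i, (0:ℝ) ≤ hherm.eigenvalues i)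
    rcases hdichot hherm i with h | h <;> rw [h]
    positivity
  · intro hσ
    have hd := hdichot hσ
    have hs := hsum hσ
    set c : ℝ := (m:ℝ)/(n:ℝ) with hc
    have hcpos : 0 < c := by positivity
    set t := (univ.filter fun i => hσ.eigenvalues i ≠ 0) with ht
    have hsum_t : ∀ f : G → ℝ, (∀ i, hσ.eigenvalues i = 0 → f i = 0) →
        ∑ i ∈ t, f i = ∑ i, f i := by
      intro f hf
      refine Finset.sum_subset (Finset.subset_univ _) fun i _ hi => ?_
      rw [ht, Finset.mem_filter] at hi
      push_neg at hi
      exact hf i (hi (Finset.mem_univ i))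
    have hval : ∀ i ∈ t, hσ.eigenvalues i = c := by
      intro i hi
      rw [ht, Finset.mem_filter] at hi
      rcases hd i with h | h
      · exact h
      · exact absurd h hi.2
    have hcard1 : (t.card : ℝ) * c = 1 := by
      have : ∑ i ∈ t, hσ.eigenvalues i = 1 := by
        rw [hsum_t _ fun i h => h, hs]
      rw [← this, Finset.sum_congr rfl hval, Finset.sum_const, nsmul_eq_mul]
    have hcardnat : t.card * m = n := by
      have : (t.card : ℝ) * m = n := by
        rw [hc] at hcard1
        field_simp at hcard1
        linarith [hcard1]
      exact_mod_cast this
    refine ⟨hd, (Nat.div_eq_of_eq_mul_left hmpos hcardnat.symm).symm, ?_⟩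
    -- entropy
    rw [vnEntropy, dif_pos hσ]
    have hE : ∑ i, hσ.eigenvalues i * Real.logb 2 (hσ.eigenvalues i)
        = (t.card : ℝ) * (c * Real.logb 2 c) := by
      rw [← hsum_t (fun i => hσ.eigenvalues i * Real.logb 2 (hσ.eigenvalues i))
        (fun i h => by simp only [h, zero_mul])]
      rw [show ∑ i ∈ t, hσ.eigenvalues i * Real.logb 2 (hσ.eigenvalues i)
          = ∑ _i ∈ t, c * Real.logb 2 c from
        Finset.sum_congr rfl fun i hi => by simp only [hval i hi],
        Finset.sum_const, nsmul_eq_mul]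
    rw [hE, ← mul_assoc, hcard1, one_mul, hc,
      Real.logb_div (by positivity) (by positivity)]
    ring
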